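/- Let 0 < ε ≪ α, and let (A,B) be an (ε,p)-regular pair in a graph G with d_p(A,B) ≥ α and |A| = |B| = m sufficiently large. Then there exist A' ⊆ A and B' ⊆ B with |A'| = |B'| ≥ (1 − √ε)m such that every vertex of A' has at least αpm/3 neighbors in B' and every vertex of B' has at least αpm/3 neighbors in A'. -/
import Mathlib
open Finset
open scoped Classical
noncomputable section

set_option maxHeartbeats 1000000

def epairs {V : Type*} [Fintype V] (G : SimpleGraph V) (U W : Finset V) : ℕ :=
  ((U ×ˢ W).filter (fun p => G.Adj p.1 p.2)).card

def pDensity {V : Type*} [Fintype V] (G : SimpleGraph V) (p : ℝ) (A B : Finset V) : ℝ :=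
  (epairs G A B : ℝ) / (p * A.card * B.card)

def RegularPair {V : Type*} [Fintype V] (G : SimpleGraph V) (ε p : ℝ) (A B : Finset V) :
    Prop :=
  ∀ A' ⊆ A, ∀ B' ⊆ B, ε * A.card ≤ (A'.card : ℝ) → ε * B.card ≤ (B'.card : ℝ) →
    |(epairs G A' B' : ℝ) - pDensity G p A B * p * A'.card * B'.card|
      ≤ ε * p * A'.card * B'.card

lemma epairs_sum_left {V : Type*} [Fintype V] (G : SimpleGraph V) (S T : Finset V) :
    epairs G S T = ∑ a ∈ S, (G.neighborFinset a ∩ T).card := by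
  unfold epairs
  rw [Finset.card_filter, Finset.sum_product]
  refine Finset.sum_congr rfl fun a _ => ?_
  rw [← Finset.card_filter]
  congr 1
  ext b
  simp [SimpleGraph.mem_neighborFinset, and_comm]

lemma epairs_sum_right {V : Type*} [Fintype V] (G : SimpleGraph V) (S T : Finset V) :
    epairs G S T = ∑ b ∈ T, (G.neighborFinset b ∩ S).card := by
  unfold epairs
  rw [Finset.card_filter, Finset.sum_product, Finset.sum_comm]
  refine Finset.sum_congr rfl fun b _ => ?_
  rw [← Finset.card_filter]
  congr 1
  ext a
  simp [SimpleGraph.mem_neighborFinset, and_comm, G.adj_comm]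

theorem stmt_14 (α : ℝ) (hα : 0 < α) :
    ∃ ε₀ : ℝ, 0 < ε₀ ∧ ∀ ε : ℝ, 0 < ε → ε ≤ ε₀ →
      ∃ m₀ : ℕ, ∀ m : ℕ, m₀ ≤ m →
        ∀ (V : Type) [Fintype V], ∀ (G : SimpleGraph V) (p : ℝ) (A B : Finset V),
          0 < p → Disjoint A B → A.card = m → B.card = m →
          RegularPair G ε p A B → α ≤ pDensity G p A B →
          ∃ A' B' : Finset V, A' ⊆ A ∧ B' ⊆ B ∧ A'.card = B'.card ∧
            (1 - Real.sqrt ε) * m ≤ (A'.card : ℝ) ∧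
            (∀ a ∈ A', α * p * m / 3 ≤ ((G.neighborFinset a ∩ B').card : ℝ)) ∧
            (∀ b ∈ B', α * p * m / 3 ≤ ((G.neighborFinset b ∩ A').card : ℝ)) := by
  refine ⟨min (α/4) (1/16), by positivity, ?_⟩
  intro ε hε hεle
  have hεα : ε ≤ α/4 := le_trans hεle (min_le_left _ _)
  have hε16 : ε ≤ 1/16 := le_trans hεle (min_le_right _ _)
  refine ⟨16, ?_⟩
  intro m hm16 V _ G p A B hp _hdisj hAm hBm hreg hd
  have hm : (16:ℝ) ≤ (m:ℝ) := by exact_mod_cast hm16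
  have hm0 : (0:ℝ) ≤ (m:ℝ) := by linarith
  have hsq0 : (0:ℝ) ≤ Real.sqrt ε := Real.sqrt_nonneg ε
  have hsq : Real.sqrt ε ≤ 1/4 := by
    have := Real.sqrt_le_sqrt hε16
    rwa [show (1/16:ℝ) = (1/4)^2 by norm_num, Real.sqrt_sq (by norm_num)] at this
  have hεsq : 2*ε ≤ Real.sqrt ε := by
    have h := Real.sq_sqrt hε.le
    nlinarith
  set s := Real.sqrt ε with hs
  have hsm2 : 2*(ε*(m:ℝ)) ≤ s*m := by
    have := mul_le_mul_of_nonneg_right hεsq hm0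
    linarith
  have hsm4 : s*(m:ℝ) ≤ m/4 := by
    have := mul_le_mul_of_nonneg_right hsq hm0
    linarith
  have hεm16 : ε*(m:ℝ) ≤ m/16 := by
    have := mul_le_mul_of_nonneg_right hε16 hm0
    linarith
  have hεm0 : (0:ℝ) < ε * m := by positivity
  set t₀ : ℕ := ⌊s * m⌋₊ + 1 with ht₀def
  have ht₀u : (t₀:ℝ) ≤ s * m + 1 := by
    have := Nat.floor_le (show (0:ℝ) ≤ s * m by positivity)
    push_cast [ht₀def]
    linarith
  have ht₀l : s * m < (t₀:ℝ) := by
    have := Nat.lt_floor_add_one (s * m)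
    push_cast [ht₀def]
    linarith
  have hαε : 3*α/4 ≤ α - ε := by linarith
  set d := pDensity G p A B with hdd
  have key : ∀ n : ℕ, ∀ A' B' X Y : Finset V, A' ⊆ A → B' ⊆ B → X ⊆ A → Y ⊆ B →
      Disjoint X A' → Disjoint Y B' →
      A'.card + X.card + Y.card = m → B'.card + X.card + Y.card = m →
      (∀ a ∈ X, ((G.neighborFinset a ∩ B').card : ℝ) < α * p * m / 2) →
      (∀ b ∈ Y, ((G.neighborFinset b ∩ A').card : ℝ) < α * p * m / 2) →
      n + X.card + Y.card = t₀ →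
      ∃ A'' B'' : Finset V, A'' ⊆ A' ∧ B'' ⊆ B' ∧ A''.card = B''.card ∧
        (1 - s) * m ≤ (A''.card : ℝ) ∧
        (∀ a ∈ A'', α * p * m / 3 ≤ ((G.neighborFinset a ∩ B'').card : ℝ)) ∧
        (∀ b ∈ B'', α * p * m / 3 ≤ ((G.neighborFinset b ∩ A'').card : ℝ)) := by
    intro n
    induction n with
    | zero =>
      intro A' B' X Y hA'A hB'B hXA hYB _hdX _hdY hcA hcB hcertX hcertY hn
      exfalso
      simp only [Nat.zero_add, zero_add] at hn
      have hnR : (X.card:ℝ) + Y.card = t₀ := by exact_mod_cast hn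
      rcases le_or_gt Y.card X.card with hcase | hcase
      · -- big certificate set X ⊆ A; use pair (X, B')
        have hcaseR : (Y.card:ℝ) ≤ X.card := by exact_mod_cast hcase
        have hx : ε * m ≤ (X.card:ℝ) := by linarith
        have hyeq : (B'.card:ℝ) = m - t₀ := by
          have : (B'.card:ℝ) + X.card + Y.card = m := by exact_mod_cast hcB
          linarith
        have hy : ε * m ≤ (B'.card:ℝ) := by rw [hyeq]; linarith
        have hreg' := hreg X hXA B' hB'B (by rwa [hAm]) (by rwa [hBm])
        rw [← hdd] at hreg'
        have hx0 : (0:ℝ) < X.card := lt_of_lt_of_le hεm0 hx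
        have hy0 : (0:ℝ) < B'.card := lt_of_lt_of_le hεm0 hy
        have hXne : X.Nonempty := Finset.card_pos.mp (by exact_mod_cast hx0)
        have he_lt : (epairs G X B' : ℝ) < α * p * m / 2 * X.card := by
          have hsum : (epairs G X B' : ℝ)
              = ∑ a ∈ X, ((G.neighborFinset a ∩ B').card : ℝ) := by
            rw [epairs_sum_left]; push_cast; ring
          rw [hsum]
          calc ∑ a ∈ X, ((G.neighborFinset a ∩ B').card : ℝ)
              < ∑ _a ∈ X, (α * p * m / 2) :=
                Finset.sum_lt_sum_of_nonempty hXne (fun a ha => hcertX a ha)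
            _ = α * p * m / 2 * X.card := by rw [Finset.sum_const, nsmul_eq_mul]; ring
        have h1 : -(ε * p * X.card * B'.card) ≤
            (epairs G X B' : ℝ) - d * p * X.card * B'.card := (abs_le.mp hreg').1
        have hxy : (0:ℝ) ≤ p * (X.card:ℝ) * B'.card := by positivity
        have h2 : (α - ε) * (p * (X.card:ℝ) * B'.card)
            ≤ (d - ε) * (p * (X.card:ℝ) * B'.card) :=
          mul_le_mul_of_nonneg_right (by linarith) hxy
        have h3 : (d - ε) * (p * (X.card:ℝ) * B'.card) ≤ (epairs G X B' : ℝ) := by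
          linarith [h1]
        have hpx : (0:ℝ) < p * X.card := mul_pos hp hx0
        have h5 : ((α - ε) * B'.card) * (p * X.card) < (α * m / 2) * (p * X.card) := by
          linarith [h2, h3, he_lt]
        have h4 : (α - ε) * (B'.card:ℝ) < α * m / 2 := lt_of_mul_lt_mul_right h5 hpx.le
        have hy2 : (3/4)*(m:ℝ) - 1 ≤ (B'.card:ℝ) := by rw [hyeq]; linarith
        have hfact1 : (3*α/4) * ((3/4)*(m:ℝ) - 1) ≤ (α - ε) * B'.card := by
          apply mul_le_mul hαε hy2 (by linarith) (by linarith)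
        have hfact2 : (0:ℝ) ≤ α * ((m:ℝ) - 12) := mul_nonneg hα.le (by linarith)
        linarith [hfact1, hfact2, h4]
      · -- big certificate set Y ⊆ B; use pair (A', Y)
        have hcaseR : (X.card:ℝ) ≤ Y.card := by exact_mod_cast hcase.le
        have hy : ε * m ≤ (Y.card:ℝ) := by linarith
        have hxeq : (A'.card:ℝ) = m - t₀ := by
          have : (A'.card:ℝ) + X.card + Y.card = m := by exact_mod_cast hcA
          linarith
        have hx : ε * m ≤ (A'.card:ℝ) := by rw [hxeq]; linarith
        have hreg' := hreg A' hA'A Y hYB (by rwa [hAm]) (by rwa [hBm])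
        rw [← hdd] at hreg'
        have hx0 : (0:ℝ) < A'.card := lt_of_lt_of_le hεm0 hx
        have hy0 : (0:ℝ) < Y.card := lt_of_lt_of_le hεm0 hy
        have hYne : Y.Nonempty := Finset.card_pos.mp (by exact_mod_cast hy0)
        have he_lt : (epairs G A' Y : ℝ) < α * p * m / 2 * Y.card := by
          have hsum : (epairs G A' Y : ℝ)
              = ∑ b ∈ Y, ((G.neighborFinset b ∩ A').card : ℝ) := by
            rw [epairs_sum_right]; push_cast; ring
          rw [hsum]
          calc ∑ b ∈ Y, ((G.neighborFinset b ∩ A').card : ℝ)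
              < ∑ _b ∈ Y, (α * p * m / 2) :=
                Finset.sum_lt_sum_of_nonempty hYne (fun b hb => hcertY b hb)
            _ = α * p * m / 2 * Y.card := by rw [Finset.sum_const, nsmul_eq_mul]; ring
        have h1 : -(ε * p * A'.card * Y.card) ≤
            (epairs G A' Y : ℝ) - d * p * A'.card * Y.card := (abs_le.mp hreg').1
        have hxy : (0:ℝ) ≤ p * (A'.card:ℝ) * Y.card := by positivity
        have h2 : (α - ε) * (p * (A'.card:ℝ) * Y.card)
            ≤ (d - ε) * (p * (A'.card:ℝ) * Y.card) :=
          mul_le_mul_of_nonneg_right (by linarith) hxy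
        have h3 : (d - ε) * (p * (A'.card:ℝ) * Y.card) ≤ (epairs G A' Y : ℝ) := by
          linarith [h1]
        have hpy : (0:ℝ) < p * Y.card := mul_pos hp hy0
        have h5 : ((α - ε) * A'.card) * (p * Y.card) < (α * m / 2) * (p * Y.card) := by
          linarith [h2, h3, he_lt]
        have h4 : (α - ε) * (A'.card:ℝ) < α * m / 2 := lt_of_mul_lt_mul_right h5 hpy.le
        have hx2 : (3/4)*(m:ℝ) - 1 ≤ (A'.card:ℝ) := by rw [hxeq]; linarith
        have hfact1 : (3*α/4) * ((3/4)*(m:ℝ) - 1) ≤ (α - ε) * A'.card := by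
          apply mul_le_mul hαε hx2 (by linarith) (by linarith)
        have hfact2 : (0:ℝ) ≤ α * ((m:ℝ) - 12) := mul_nonneg hα.le (by linarith)
        linarith [hfact1, hfact2, h4]
    | succ n ih =>
      intro A' B' X Y hA'A hB'B hXA hYB hdX hdY hcA hcB hcertX hcertY hn
      have htub : (X.card:ℝ) + Y.card ≤ s * m := by
        have h1 : (n:ℝ) + 1 + X.card + Y.card = t₀ := by exact_mod_cast hn
        have hn0 : (0:ℝ) ≤ n := Nat.cast_nonneg n
        linarith
      have hA'big : (1 - s) * m ≤ (A'.card:ℝ) := by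
        have : (A'.card:ℝ) + X.card + Y.card = m := by exact_mod_cast hcA
        linarith [htub]
      have hB'big : (1 - s) * m ≤ (B'.card:ℝ) := by
        have : (B'.card:ℝ) + X.card + Y.card = m := by exact_mod_cast hcB
        linarith [htub]
      have hA'pos : 0 < A'.card := by
        have h : (0:ℝ) < A'.card := by linarith [hA'big, hsm4]
        exact_mod_cast h
      have hB'pos : 0 < B'.card := by
        have h : (0:ℝ) < B'.card := by linarith [hB'big, hsm4]
        exact_mod_cast h
      by_cases hbadA : ∃ a ∈ A', ((G.neighborFinset a ∩ B').card : ℝ) < α * p * m / 2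
      · obtain ⟨a, haA', hadeg⟩ := hbadA
        obtain ⟨b₀, hb₀⟩ := Finset.card_pos.mp hB'pos
        have haX : a ∉ X := Finset.disjoint_right.mp hdX haA'
        have := ih (A'.erase a) (B'.erase b₀) (insert a X) Y
          ((Finset.erase_subset _ _).trans hA'A)
          ((Finset.erase_subset _ _).trans hB'B)
          (Finset.insert_subset (hA'A haA') hXA) hYB
          (by
            rw [Finset.disjoint_insert_left]
            exact ⟨Finset.notMem_erase a A',
              hdX.mono_right (Finset.erase_subset _ _)⟩)
          (hdY.mono_right (Finset.erase_subset _ _))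
          (by
            rw [Finset.card_erase_of_mem haA', Finset.card_insert_of_notMem haX]
            omega)
          (by
            rw [Finset.card_erase_of_mem hb₀, Finset.card_insert_of_notMem haX]
            omega)
          (by
            intro x hx
            have hmono : ((G.neighborFinset x ∩ B'.erase b₀).card : ℝ)
                ≤ ((G.neighborFinset x ∩ B').card : ℝ) := by
              exact_mod_cast Finset.card_le_card
                (Finset.inter_subset_inter le_rfl (Finset.erase_subset _ _))
            rcases Finset.mem_insert.mp hx with rfl | hx
            · exact lt_of_le_of_lt hmono hadeg
            · exact lt_of_le_of_lt hmono (hcertX x hx))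
          (by
            intro y hy
            have hmono : ((G.neighborFinset y ∩ A'.erase a).card : ℝ)
                ≤ ((G.neighborFinset y ∩ A').card : ℝ) := by
              exact_mod_cast Finset.card_le_card
                (Finset.inter_subset_inter le_rfl (Finset.erase_subset _ _))
            exact lt_of_le_of_lt hmono (hcertY y hy))
          (by rw [Finset.card_insert_of_notMem haX]; omega)
        obtain ⟨A'', B'', h1, h2, h3⟩ := this
        exact ⟨A'', B'', h1.trans (Finset.erase_subset _ _),
          h2.trans (Finset.erase_subset _ _), h3⟩
      · by_cases hbadB : ∃ b ∈ B', ((G.neighborFinset b ∩ A').card : ℝ) < α * p * m / 2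
        · obtain ⟨b, hbB', hbdeg⟩ := hbadB
          obtain ⟨a₀, ha₀⟩ := Finset.card_pos.mp hA'pos
          have hbY : b ∉ Y := Finset.disjoint_right.mp hdY hbB'
          have := ih (A'.erase a₀) (B'.erase b) X (insert b Y)
            ((Finset.erase_subset _ _).trans hA'A)
            ((Finset.erase_subset _ _).trans hB'B)
            hXA (Finset.insert_subset (hB'B hbB') hYB)
            (hdX.mono_right (Finset.erase_subset _ _))
            (by
              rw [Finset.disjoint_insert_left]
              exact ⟨Finset.notMem_erase b B',
                hdY.mono_right (Finset.erase_subset _ _)⟩)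
            (by
              rw [Finset.card_erase_of_mem ha₀, Finset.card_insert_of_notMem hbY]
              omega)
            (by
              rw [Finset.card_erase_of_mem hbB', Finset.card_insert_of_notMem hbY]
              omega)
            (by
              intro x hx
              have hmono : ((G.neighborFinset x ∩ B'.erase b).card : ℝ)
                  ≤ ((G.neighborFinset x ∩ B').card : ℝ) := by
                exact_mod_cast Finset.card_le_card
                  (Finset.inter_subset_inter le_rfl (Finset.erase_subset _ _))
              exact lt_of_le_of_lt hmono (hcertX x hx))
            (by
              intro y hy
              have hmono : ((G.neighborFinset y ∩ A'.erase a₀).card : ℝ)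
                  ≤ ((G.neighborFinset y ∩ A').card : ℝ) := by
                exact_mod_cast Finset.card_le_card
                  (Finset.inter_subset_inter le_rfl (Finset.erase_subset _ _))
              rcases Finset.mem_insert.mp hy with rfl | hy
              · exact lt_of_le_of_lt hmono hbdeg
              · exact lt_of_le_of_lt hmono (hcertY y hy))
            (by rw [Finset.card_insert_of_notMem hbY]; omega)
          obtain ⟨A'', B'', h1, h2, h3⟩ := this
          exact ⟨A'', B'', h1.trans (Finset.erase_subset _ _),
            h2.trans (Finset.erase_subset _ _), h3⟩
        · push_neg at hbadA hbadB
          have hcards : A'.card = B'.card := by omega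
          have hthr : α * p * m / 3 ≤ α * p * m / 2 := by
            have : (0:ℝ) ≤ α * p * m := by positivity
            linarith
          exact ⟨A', B', le_rfl, le_rfl, hcards, hA'big,
            fun a ha => hthr.trans (hbadA a ha),
            fun b hb => hthr.trans (hbadB b hb)⟩
  obtain ⟨A'', B'', h1, h2, h3, h4, h5, h6⟩ :=
    key t₀ A B ∅ ∅ le_rfl le_rfl (Finset.empty_subset _) (Finset.empty_subset _)
      (Finset.disjoint_empty_left _) (Finset.disjoint_empty_left _)
      (by simp [hAm]) (by simp [hBm]) (by simp) (by simp) (by simp)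
  exact ⟨A'', B'', h1, h2, h3, h4, h5, h6⟩
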